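/- Let U ⊆ F_2^n be a set that intersects every affine subspace of dimension τ (a τ-universal set), let τ ≤ k ≤ n, let G ∈ F_2^{(n−k)×n} be a full-rank matrix and s ∈ F_2^{n−k}. Then |{y ∈ U : G·y = s}| ≥ 2^{k−τ}. -/

import Mathlib

/-- If `U` is `τ`-universal (meets every affine subspace of dimension `τ`), `τ ≤ k ≤ n`,
`G` is a full-rank `(n-k) × n` matrix and `s` a syndrome, then the fiber `{y ∈ U : Gy = s}`
has at least `2^{k-τ}` elements. -/
theorem stmt16 (n k τ : ℕ) (hτk : τ ≤ k) (hkn : k ≤ n) (U : Set (Fin n → ZMod 2))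
    (hU : ∀ W : Submodule (ZMod 2) (Fin n → ZMod 2), Module.finrank (ZMod 2) W = τ →
      ∀ v : Fin n → ZMod 2, ∃ x ∈ U, ∃ w ∈ W, x = v + w)
    (G : Matrix (Fin (n - k)) (Fin n) (ZMod 2)) (hG : G.rank = n - k)
    (s : Fin (n - k) → ZMod 2) :
    2 ^ (k - τ) ≤ Nat.card {y : Fin n → ZMod 2 | y ∈ U ∧ G.mulVec y = s} := by
  classical
  set f := G.mulVecLin with hf
  -- kernel has finrank k
  have hrn : Module.finrank (ZMod 2) (LinearMap.range f) +
      Module.finrank (ZMod 2) (LinearMap.ker f) = n := by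
    simpa using LinearMap.finrank_range_add_finrank_ker f
  have hrange : Module.finrank (ZMod 2) (LinearMap.range f) = n - k := hG
  have hker : Module.finrank (ZMod 2) (LinearMap.ker f) = k := by omega
  -- f is surjective
  have hsurj : Function.Surjective f := by
    have : LinearMap.range f = ⊤ := Submodule.eq_top_of_finrank_eq (by
      rw [hrange]; simp [Module.finrank_pi])
    exact LinearMap.range_eq_top.mp this
  obtain ⟨y₀, hy₀⟩ := hsurj s
  -- basis of kernel, pushed to ambient space
  let b : Module.Basis (Fin k) (ZMod 2) (LinearMap.ker f) := Module.finBasisOfFinrankEq _ _ hker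
  let v : Fin k → (Fin n → ZMod 2) := fun i => (b i : Fin n → ZMod 2)
  have hv : LinearIndependent (ZMod 2) v :=
    b.linearIndependent.map' (LinearMap.ker f).subtype (LinearMap.ker f).ker_subtype
  have hvmem : ∀ i, v i ∈ LinearMap.ker f := fun i => (b i).2
  let g₁ : Fin τ → Fin k := Fin.castLE hτk
  let g₂ : Fin (k - τ) → Fin k := fun i => ⟨τ + i, by omega⟩
  have hg₁ : Function.Injective g₁ := Fin.castLE_injective hτk
  have hg₂ : Function.Injective g₂ := by
    intro a b h
    have := congrArg Fin.val h
    simp only [g₂] at this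
    exact Fin.ext (by omega)
  set W : Submodule (ZMod 2) (Fin n → ZMod 2) := Submodule.span (ZMod 2) (Set.range (v ∘ g₁))
  set C : Submodule (ZMod 2) (Fin n → ZMod 2) := Submodule.span (ZMod 2) (Set.range (v ∘ g₂))
  have hWrank : Module.finrank (ZMod 2) W = τ := by
    rw [finrank_span_eq_card (hv.comp g₁ hg₁)]; simp
  have hCrank : Module.finrank (ZMod 2) C = k - τ := by
    rw [finrank_span_eq_card (hv.comp g₂ hg₂)]; simp
  have hdisj : Disjoint W C := by
    have : Disjoint (Set.range g₁) (Set.range g₂) := by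
      rw [Set.disjoint_iff_forall_ne]
      rintro a ⟨i, rfl⟩ b ⟨j, rfl⟩ h
      have := congrArg Fin.val h
      simp only [g₁, g₂, Fin.coe_castLE] at this
      omega
    have h' := hv.disjoint_span_image this
    rwa [← Set.range_comp, ← Set.range_comp] at h'
  have hWker : W ≤ LinearMap.ker f := by
    rw [Submodule.span_le]; rintro _ ⟨i, rfl⟩; exact hvmem _
  have hCker : C ≤ LinearMap.ker f := by
    rw [Submodule.span_le]; rintro _ ⟨i, rfl⟩; exact hvmem _
  -- the map from C into the fiber
  have hchoice : ∀ c : C, ∃ x, x ∈ U ∧ ∃ w ∈ W, x = (y₀ + (c : Fin n → ZMod 2)) + w := by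
    intro c
    obtain ⟨x, hx, w, hw, hxw⟩ := hU W hWrank (y₀ + (c : Fin n → ZMod 2))
    exact ⟨x, hx, w, hw, hxw⟩
  choose F hFU w hwW hFeq using hchoice
  have hFmem : ∀ c : C, F c ∈ {y : Fin n → ZMod 2 | y ∈ U ∧ G.mulVec y = s} := by
    intro c
    refine ⟨hFU c, ?_⟩
    have hc : f (c : Fin n → ZMod 2) = 0 := hCker c.2
    have hw0 : f (w c) = 0 := hWker (hwW c)
    have : f (F c) = s := by
      rw [hFeq c]
      simp only [map_add, hc, hw0, hy₀, add_zero]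
    simpa [hf] using this
  have hFinj : Function.Injective
      (fun c : C => (⟨F c, hFmem c⟩ : {y : Fin n → ZMod 2 | y ∈ U ∧ G.mulVec y = s})) := by
    intro c c' h
    have h' : F c = F c' := congrArg Subtype.val h
    have heq : (c : Fin n → ZMod 2) - c' = w c' - w c := by
      have h2 := (hFeq c).symm.trans (h'.trans (hFeq c'))
      linear_combination h2
    have hmemC : (c : Fin n → ZMod 2) - c' ∈ C := sub_mem c.2 c'.2
    have hmemW : (c : Fin n → ZMod 2) - c' ∈ W := heq ▸ sub_mem (hwW c') (hwW c)
    have : (c : Fin n → ZMod 2) - c' = 0 :=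
      Submodule.disjoint_def.mp hdisj _ hmemW hmemC
    exact Subtype.ext (by linear_combination this)
  have hcard : Nat.card C = 2 ^ (k - τ) := by
    have : Fintype.card C = Fintype.card (ZMod 2) ^ Module.finrank (ZMod 2) C :=
      Module.card_eq_pow_finrank
    rw [Nat.card_eq_fintype_card, this, hCrank, ZMod.card]
  calc 2 ^ (k - τ) = Nat.card C := hcard.symm
    _ ≤ _ := Nat.card_le_card_of_injective _ hFinj
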